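/- arXiv:1412.1128 — 4 statements merged into one kernel-verified Lean document; each statement's English description precedes it below -/
import Mathlib

section
/- Let h be the Hénon map with parameters M₁, M₂ ∈ ℝ. Then h has a fixed point at which the Jacobian matrix of h has eigenvalue −1 if and only if 4M₁ = 3(1 − M₂)². (This is the period-doubling bifurcation curve L^{−1} of the Hénon family, corresponding to a fixed point with multiplier −1.) -/
/-- The Hénon map with parameters `M₁, M₂ : ℝ`: `h(x,y) = (y, M₁ + M₂·x − y²)`. -/
def henon (M₁ M₂ : ℝ) (p : ℝ × ℝ) : ℝ × ℝ :=
  (p.2, M₁ + M₂ * p.1 - p.2 ^ 2)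

/-- The Jacobian matrix of the Hénon map at the point `(x,y)`: `[[0, 1], [M₂, −2y]]`. -/
def henonJac (M₂ : ℝ) (p : ℝ × ℝ) : Matrix (Fin 2) (Fin 2) ℝ :=
  !![0, 1; M₂, -2 * p.2]

/-- `μ ∈ ℂ` is an eigenvalue of the real 2×2 matrix `A`
(eigenvalues of real matrices are taken over `ℂ`). -/
def hasEigenvalue (A : Matrix (Fin 2) (Fin 2) ℝ) (μ : ℂ) : Prop :=
  (A.map (fun t : ℝ => (t : ℂ)) - μ • 1).det = 0

theorem eig_neg_one_iff (M₂ x y : ℝ) :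
    hasEigenvalue (henonJac M₂ (x, y)) (-1) ↔ 1 - 2 * y - M₂ = 0 := by
  unfold hasEigenvalue henonJac
  rw [Matrix.det_fin_two]
  simp [Matrix.map_apply, Matrix.one_apply]
  rw [show (-(2 * (y : ℝ)) + 1 - M₂ : ℂ) = ((1 - 2 * y - M₂ : ℝ) : ℂ) by push_cast; ring]
  exact_mod_cast Iff.rfl

/-- the period-doubling curve `L^{−1}` of the Hénon family. The Hénon map
has a fixed point at which the Jacobian matrix has eigenvalue `−1` iff `4M₁ = 3(1−M₂)²`. -/
theorem stmt_4 (M₁ M₂ : ℝ) :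
    (∃ p : ℝ × ℝ, henon M₁ M₂ p = p ∧ hasEigenvalue (henonJac M₂ p) (-1)) ↔
      4 * M₁ = 3 * (1 - M₂) ^ 2 := by
  constructor
  · rintro ⟨⟨x, y⟩, hfix, heig⟩
    rw [eig_neg_one_iff] at heig
    simp only [henon, Prod.mk.injEq] at hfix
    obtain ⟨h1, h2⟩ := hfix
    subst h1
    have hm : M₂ = 1 - 2 * y := by linarith
    subst hm
    linear_combination 4 * h2
  · intro h
    refine ⟨((1 - M₂) / 2, (1 - M₂) / 2), ?_, ?_⟩
    · simp only [henon, Prod.mk.injEq]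
      constructor
      · trivial
      · nlinarith [h]
    · rw [eig_neg_one_iff]; ring
end

section
/- Let h be the Hénon map with parameters M₁, M₂ ∈ ℝ, and assume −1 < M₂ < 0 and −(1 − M₂)² < 4M₁ < 3(1 − M₂)². Set y₊ = ((M₂ − 1) + √((1 − M₂)² + 4M₁))/2. Then (y₊, y₊) is a fixed point of h, and both complex eigenvalues of the Jacobian matrix of h at (y₊, y₊) have modulus strictly less than 1 (the fixed point is an asymptotically stable sink). -/
/-- Any complex root of `z² + bz + c` with real `b, c`, `0 < c < 1`, `|b| < 1 + c`
has modulus `< 1` (Jury stability criterion). -/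
lemma quad_root_small (b c : ℝ) (hc0 : 0 < c) (hc1 : c < 1)
    (hb : |b| < 1 + c) (μ : ℂ) (h : μ^2 + (b:ℂ)*μ + (c:ℂ) = 0) : ‖μ‖ < 1 := by
  by_cases him : μ.im = 0
  · have hre : μ = (μ.re : ℂ) := by
      apply Complex.ext <;> simp [him]
    set r := μ.re with hrdef
    have hr : r^2 + b*r + c = 0 := by
      have h' := h
      rw [hre] at h'
      exact_mod_cast h'
    have habs : |r| < 1 := by
      by_contra hcon
      push_neg at hcon
      nlinarith [sq_abs r, abs_nonneg r, abs_nonneg b, neg_abs_le (b*r), abs_mul b r]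
    rw [hre]
    simpa using habs
  · have hconj : (starRingEnd ℂ) μ ^ 2 + (b:ℂ) * (starRingEnd ℂ) μ + (c:ℂ) = 0 := by
      have := congrArg (starRingEnd ℂ) h
      simpa [map_add, map_mul, map_pow, Complex.conj_ofReal] using this
    have hdiff : (μ - (starRingEnd ℂ) μ) * (μ + (starRingEnd ℂ) μ + (b:ℂ)) = 0 := by
      linear_combination h - hconj
    have hne : μ - (starRingEnd ℂ) μ ≠ 0 := by
      intro hz
      apply him
      have : μ.im - (-μ.im) = 0 := by
        have := congrArg Complex.im hz
        simpa [Complex.sub_im, Complex.conj_im] using this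
      linarith
    have hsum : μ + (starRingEnd ℂ) μ + (b:ℂ) = 0 := by
      rcases mul_eq_zero.mp hdiff with h' | h'
      · exact absurd h' hne
      · exact h'
    have hprod : μ * (starRingEnd ℂ) μ = (c:ℂ) := by
      have hcm : (starRingEnd ℂ) μ = -(b:ℂ) - μ := by linear_combination hsum
      rw [hcm]
      linear_combination -h
    have hnsq : Complex.normSq μ = c := by
      have := Complex.mul_conj μ
      rw [this] at hprod
      exact_mod_cast hprod
    have : (‖μ‖)^2 = c := by rw [Complex.sq_norm]; exact hnsq
    nlinarith [norm_nonneg μ]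

/-- for `−1 < M₂ < 0` and `−(1−M₂)² < 4M₁ < 3(1−M₂)²`, the point
`(y₊, y₊)` with `y₊ = ((M₂−1) + √((1−M₂)² + 4M₁))/2` is a fixed point of the Hénon map and
all complex eigenvalues of the Jacobian matrix there have modulus `< 1` (a sink). -/
theorem stmt_5 (M₁ M₂ : ℝ) (h1 : -1 < M₂) (h2 : M₂ < 0)
    (h3 : -(1 - M₂) ^ 2 < 4 * M₁) (h4 : 4 * M₁ < 3 * (1 - M₂) ^ 2)
    (yp : ℝ) (hyp : yp = ((M₂ - 1) + Real.sqrt ((1 - M₂) ^ 2 + 4 * M₁)) / 2) :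
    henon M₁ M₂ (yp, yp) = (yp, yp) ∧
    ∀ μ : ℂ, hasEigenvalue (henonJac M₂ (yp, yp)) μ → ‖μ‖ < 1 := by
  have hD : (0:ℝ) < (1 - M₂)^2 + 4*M₁ := by nlinarith
  set s := Real.sqrt ((1 - M₂)^2 + 4*M₁) with hs
  have hs2 : s^2 = (1 - M₂)^2 + 4*M₁ := Real.sq_sqrt hD.le
  have hs0 : 0 < s := Real.sqrt_pos.mpr hD
  have hslt : s < 2*(1 - M₂) := by nlinarith [hs2, hs0]
  have hfix : yp^2 + (1 - M₂)*yp - M₁ = 0 := by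
    rw [hyp]; nlinarith [hs2]
  have hb1 : 2*yp < 1 - M₂ := by rw [hyp]; nlinarith
  have hb2 : -(1 - M₂) < 2*yp := by rw [hyp]; nlinarith
  constructor
  · simp only [henon, Prod.mk.injEq]
    constructor
    · trivial
    · nlinarith [hfix]
  · intro μ hμ
    have heq : μ^2 + ((2*yp : ℝ):ℂ)*μ + ((-M₂ : ℝ):ℂ) = 0 := by
      unfold hasEigenvalue henonJac at hμ
      simp [Matrix.det_fin_two, Matrix.map_apply, Matrix.smul_apply, Matrix.one_apply] at hμ
      push_cast
      linear_combination hμ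
    have habs : |2*yp| < 1 + -M₂ := by
      rw [abs_lt]; constructor <;> linarith
    exact quad_root_small (2*yp) (-M₂) (by linarith) (by linarith) habs μ heq
end

section
/- Let h be the Hénon map with parameters M₁, M₂ ∈ ℝ, and assume −1 < M₂ < 0 and 3(1 − M₂)² < 4M₁ < (1 + M₂)² + 4(1 − M₂)². Then h has a period-2 orbit {(u,v), (v,u)} with u + v = 1 − M₂, u·v = (1 − M₂)² − M₁ and u ≠ v, and both complex eigenvalues of the 2×2 matrix product Dh(v,u)·Dh(u,v) (the Jacobian matrix of h∘h along the orbit, where Dh(x,y) = [[0,1],[M₂,−2y]]) have modulus strictly less than 1; i.e. the period-2 orbit born at the period-doubling curve 4M₁ = 3(1 − M₂)² is asymptotically stable. -/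
/-- Auxiliary: both complex roots `a + b i` of `μ² − τμ + δ` with `0 < δ < 1` and
`|τ| < 1 + δ` lie strictly inside the unit circle (Jury criterion). -/
lemma quad_stable (τ δ a b : ℝ) (hδ0 : 0 < δ) (hδ1 : δ < 1) (hτ : |τ| < 1 + δ)
    (hre : a ^ 2 - b ^ 2 - τ * a + δ = 0) (him : b * (2 * a - τ) = 0) :
    a ^ 2 + b ^ 2 < 1 := by
  rcases mul_eq_zero.mp him with hb0 | ha2
  · have hb2 : b ^ 2 = 0 := by rw [hb0]; ring
    rcases eq_or_ne a 0 with h0 | h0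
    · rw [h0, hb0]; norm_num
    · have ht : 0 < |a| := abs_pos.mpr h0
      have f1 : a ^ 2 + δ ≤ |τ| * |a| := by
        calc a ^ 2 + δ = τ * a := by linarith
          _ ≤ |τ * a| := le_abs_self _
          _ = |τ| * |a| := abs_mul _ _
      have f2 : |τ| * |a| < (1 + δ) * |a| := mul_lt_mul_of_pos_right hτ ht
      nlinarith [sq_abs a, abs_nonneg a, sq_nonneg (|a| - 1)]
  · have : a ^ 2 + b ^ 2 = δ := by linear_combination a * ha2 - hre
    linarith

/-- Auxiliary: eigenvalues of the Jacobian of `h∘h` along the orbit satisfy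
`μ² − (2M₂ + 4uv)μ + M₂² = 0`. -/
lemma henon_jac2_char (M₂ u v : ℝ) (μ : ℂ)
    (hμ : hasEigenvalue (henonJac M₂ (v, u) * henonJac M₂ (u, v)) μ) :
    μ ^ 2 - (2 * M₂ + 4 * u * v) * μ + M₂ ^ 2 = 0 := by
  have hA : henonJac M₂ (v, u) * henonJac M₂ (u, v)
      = !![M₂, -2 * v; -2 * u * M₂, M₂ + 4 * u * v] := by
    simp [henonJac, Matrix.mul_fin_two]; ring_nf
  rw [hasEigenvalue, hA] at hμ
  have hB : ((!![M₂, -2 * v; -2 * u * M₂, M₂ + 4 * u * v] : Matrix (Fin 2) (Fin 2) ℝ).map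
      (fun t : ℝ => (t : ℂ)) - μ • 1)
      = !![(M₂ : ℂ) - μ, -2 * v; -2 * u * M₂, (M₂ : ℂ) + 4 * u * v - μ] := by
    ext i j
    fin_cases i <;> fin_cases j <;> simp [Matrix.map_apply, Matrix.one_apply]
  rw [hB, Matrix.det_fin_two_of] at hμ
  linear_combination hμ

/-- for `−1 < M₂ < 0` and `3(1−M₂)² < 4M₁ < (1+M₂)² + 4(1−M₂)²`, the Hénon
map has a period-2 orbit `{(u,v), (v,u)}` with `u + v = 1 − M₂`, `u·v = (1−M₂)² − M₁`,
`u ≠ v`, and all complex eigenvalues of `Dh(v,u)·Dh(u,v)` (the Jacobian matrix of `h∘h`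
along the orbit) have modulus `< 1`: the period-2 orbit is asymptotically stable. -/
theorem stmt_8 (M₁ M₂ : ℝ) (h1 : -1 < M₂) (h2 : M₂ < 0)
    (h3 : 3 * (1 - M₂) ^ 2 < 4 * M₁)
    (h4 : 4 * M₁ < (1 + M₂) ^ 2 + 4 * (1 - M₂) ^ 2) :
    ∃ u v : ℝ, u ≠ v ∧ u + v = 1 - M₂ ∧ u * v = (1 - M₂) ^ 2 - M₁ ∧
      henon M₁ M₂ (u, v) = (v, u) ∧ henon M₁ M₂ (v, u) = (u, v) ∧
      ∀ μ : ℂ, hasEigenvalue (henonJac M₂ (v, u) * henonJac M₂ (u, v)) μ →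
        ‖μ‖ < 1 := by
  have hDpos : 0 < 4 * M₁ - 3 * (1 - M₂) ^ 2 := by linarith
  set R : ℝ := Real.sqrt (4 * M₁ - 3 * (1 - M₂) ^ 2) with hR
  have hsq : R ^ 2 = 4 * M₁ - 3 * (1 - M₂) ^ 2 := Real.sq_sqrt hDpos.le
  have hRpos : 0 < R := Real.sqrt_pos.mpr hDpos
  refine ⟨(1 - M₂ + R) / 2, (1 - M₂ - R) / 2, by intro h; nlinarith, by ring, ?_, ?_, ?_, ?_⟩
  · nlinarith [hsq]
  · simp only [henon, Prod.mk.injEq]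
    exact ⟨trivial, by nlinarith [hsq]⟩
  · simp only [henon, Prod.mk.injEq]
    exact ⟨trivial, by nlinarith [hsq]⟩
  · intro μ hμ
    obtain ⟨u, v, hsum, hprod, hu, hv⟩ :
        ∃ u v : ℝ, u + v = 1 - M₂ ∧ u * v = (1 - M₂) ^ 2 - M₁ ∧
          (1 - M₂ + R) / 2 = u ∧ (1 - M₂ - R) / 2 = v :=
      ⟨_, _, by ring, by nlinarith [hsq], rfl, rfl⟩
    rw [hu, hv] at hμ
    have hquad := henon_jac2_char M₂ u v μ hμ
    have hτlt : |2 * M₂ + 4 * u * v| < 1 + M₂ ^ 2 := by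
      rw [abs_lt]
      constructor <;> nlinarith [hprod]
    have hδ0 : 0 < M₂ ^ 2 := by nlinarith
    have hδ1 : M₂ ^ 2 < 1 := by nlinarith
    have hre : μ.re ^ 2 - μ.im ^ 2 - (2 * M₂ + 4 * u * v) * μ.re + M₂ ^ 2 = 0 := by
      have := congrArg Complex.re hquad
      simpa [pow_two, Complex.mul_re, Complex.mul_im] using this
    have him : μ.im * (2 * μ.re - (2 * M₂ + 4 * u * v)) = 0 := by
      have := congrArg Complex.im hquad
      simp [pow_two, Complex.mul_re, Complex.mul_im] at this
      linear_combination this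
    have h1' : μ.re ^ 2 + μ.im ^ 2 < 1 :=
      quad_stable _ _ _ _ hδ0 hδ1 hτlt hre him
    have habs : ‖μ‖ = Real.sqrt (μ.re ^ 2 + μ.im ^ 2) := by
      rw [Complex.norm_def, Complex.normSq_apply]; ring_nf
    rw [habs]
    calc Real.sqrt (μ.re ^ 2 + μ.im ^ 2) < Real.sqrt 1 :=
          Real.sqrt_lt_sqrt (by positivity) h1'
      _ = 1 := Real.sqrt_one
end

section
/- Let M ∈ ℝ, c ∈ ℝ with c ≠ 0, and let H be the map H(x,y) = (x̄, ȳ) with x̄ = M + c·x − y², ȳ = (y + x̄² − M)/c. A point (u,v) with u ≠ v is a fixed point of H if and only if u + v = 1 − c and u·v = (1 − c)² − M. Consequently H has fixed points off the diagonal if and only if 4M > 3(c − 1)² (above the pitchfork curve PF), in which case there are exactly two such points and they form a symmetric couple: (u,v) is a fixed point off the diagonal if and only if (v,u) is. -/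
/-- The map `H(x,y) = (x̄, ȳ)` with `x̄ = M + c·x − y²` and `ȳ = (y + x̄² − M)/c`,
the explicit form of the implicit system `x̄ = M + c·x − y²`, `c·ȳ = −M + y + x̄²`. -/
noncomputable def Hmap (M c : ℝ) (p : ℝ × ℝ) : ℝ × ℝ :=
  (M + c * p.1 - p.2 ^ 2,
    (p.2 + (M + c * p.1 - p.2 ^ 2) ^ 2 - M) / c)

/-- The Jacobian matrix (2×2 real derivative matrix) of `Hmap M c` at the point
`(x,y)`, where `x̄ = M + c·x − y²`:
`[[c, −2y], [2x̄, (1 − 4x̄y)/c]]`. -/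
noncomputable def HJac (M c : ℝ) (p : ℝ × ℝ) : Matrix (Fin 2) (Fin 2) ℝ :=
  !![c, -2 * p.2;
     2 * (M + c * p.1 - p.2 ^ 2), (1 - 4 * (M + c * p.1 - p.2 ^ 2) * p.2) / c]

lemma hmap_key (M c : ℝ) (hc : c ≠ 0) (u v : ℝ) (huv : u ≠ v) :
    Hmap M c (u, v) = (u, v) ↔ u + v = 1 - c ∧ u * v = (1 - c) ^ 2 - M := by
  rw [Hmap, Prod.mk.injEq]
  constructor
  · rintro ⟨h1, h2⟩
    rw [div_eq_iff hc, h1] at h2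
    have key0 : (u - v) * (u + v - (1 - c)) = 0 := by linear_combination h1 + h2
    have hs : u + v = 1 - c := by
      rcases mul_eq_zero.mp key0 with h | h
      · exact absurd (sub_eq_zero.mp h) huv
      · linarith
    exact ⟨hs, by linear_combination (1 - c + v) * hs + h1⟩
  · rintro ⟨hs, hp⟩
    have h1 : M + c * u - v ^ 2 = u := by linear_combination hp - (v + 1 - c) * hs
    refine ⟨h1, ?_⟩
    rw [h1, div_eq_iff hc]
    linear_combination (u + 1 - c) * hs - hp

/-- a point `(u,v)` with `u ≠ v` is a fixed point of `H` iff
`u + v = 1 − c` and `u·v = (1−c)² − M`; `H` has fixed points off the diagonal iff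
`4M > 3(c−1)²`, in which case there are exactly two and they form a symmetric couple. -/
theorem stmt_14 (M c : ℝ) (hc : c ≠ 0) :
    (∀ u v : ℝ, u ≠ v →
      (Hmap M c (u, v) = (u, v) ↔ u + v = 1 - c ∧ u * v = (1 - c) ^ 2 - M)) ∧
    ((∃ p : ℝ × ℝ, Hmap M c p = p ∧ p.1 ≠ p.2) ↔ 4 * M > 3 * (c - 1) ^ 2) ∧
    (4 * M > 3 * (c - 1) ^ 2 → ∃ u v : ℝ, u ≠ v ∧
      {p : ℝ × ℝ | Hmap M c p = p ∧ p.1 ≠ p.2} = {(u, v), (v, u)}) ∧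
    (∀ u v : ℝ, u ≠ v →
      (Hmap M c (u, v) = (u, v) ↔ Hmap M c (v, u) = (v, u))) := by
  have key := hmap_key M c hc
  -- the two roots when the discriminant is positive
  have mk_roots : 4 * M > 3 * (c - 1) ^ 2 → ∃ u v : ℝ, u ≠ v ∧
      u + v = 1 - c ∧ u * v = (1 - c) ^ 2 - M := by
    intro hM
    set D : ℝ := 4 * M - 3 * (c - 1) ^ 2 with hD
    have hDpos : 0 < D := by linarith
    have hs2 : Real.sqrt D ^ 2 = D := Real.sq_sqrt hDpos.le
    have hspos : 0 < Real.sqrt D := Real.sqrt_pos.mpr hDpos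
    refine ⟨((1 - c) + Real.sqrt D) / 2, ((1 - c) - Real.sqrt D) / 2, by
      intro h; nlinarith, by ring, by nlinarith⟩
  refine ⟨key, ?_, ?_, ?_⟩
  · constructor
    · rintro ⟨⟨u, v⟩, hfix, hne⟩
      obtain ⟨hs, hp⟩ := (key u v hne).mp hfix
      have hne' : u ≠ v := hne
      have h0 : (u - v) ^ 2 = 4 * M - 3 * (c - 1) ^ 2 := by
        linear_combination (u + v + 1 - c) * hs - 4 * hp
      have h1 : (0:ℝ) < (u - v) ^ 2 := by
        have := sub_ne_zero.mpr hne'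
        positivity
      linarith
    · intro hM
      obtain ⟨u, v, hne, hs, hp⟩ := mk_roots hM
      exact ⟨(u, v), (key u v hne).mpr ⟨hs, hp⟩, hne⟩
  · intro hM
    obtain ⟨u, v, hne, hs, hp⟩ := mk_roots hM
    refine ⟨u, v, hne, ?_⟩
    ext ⟨a, b⟩
    simp only [Set.mem_setOf_eq, Set.mem_insert_iff, Set.mem_singleton_iff,
      Prod.mk.injEq]
    constructor
    · rintro ⟨hfix, hab⟩
      obtain ⟨has, hap⟩ := (key a b hab).mp hfix
      have hroot : (a - u) * (a - v) = 0 := by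
        linear_combination a * has - hap - a * hs + hp
      rcases mul_eq_zero.mp hroot with h | h
      · left; constructor <;> [linarith [sub_eq_zero.mp h]; linarith [sub_eq_zero.mp h]]
      · right; constructor <;> [linarith [sub_eq_zero.mp h]; linarith [sub_eq_zero.mp h]]
    · rintro (⟨ha, hb⟩ | ⟨ha, hb⟩) <;> rw [ha, hb]
      · exact ⟨(key u v hne).mpr ⟨hs, hp⟩, hne⟩
      · exact ⟨(key v u hne.symm).mpr ⟨by linarith, by linarith [hp, mul_comm u v]⟩, hne.symm⟩
  · intro u v huv
    rw [key u v huv, key v u huv.symm]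
    constructor <;> rintro ⟨h1, h2⟩ <;> exact ⟨by linarith, by linarith [mul_comm u v]⟩
end
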